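/- For n ≥ 0 let Φ_n(x) = Σ_I x^{trees(I)} ∈ ℤ[x], the sum running over all interval-posets I of size n. Then Φ_0 = 1 and, for every n ≥ 1, (x−1)·Φ_n(x) = Σ_{a+b = n−1, a,b ≥ 0} x·Φ_a(x)·(x·Φ_b(x) − Φ_b(1)), where Φ_b(1) denotes the evaluation of Φ_b at x = 1 (i.e. the number of interval-posets of size b). -/

import Mathlib

open Polynomial

/-- A binary tree: either the empty tree or a pair of binary trees
(left and right subtrees) grafted on an internal node. -/
inductive BinTree : Type
  | leaf : BinTree
  | node : BinTree → BinTree → BinTree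

namespace BinTree

/-- The size of a binary tree: its number of internal nodes. -/
def size : BinTree → ℕ
  | leaf => 0
  | node l r => l.size + r.size + 1

/-- One right rotation somewhere in the tree: `Rot T T'` means that `T'` is obtained
from `T` by replacing one subtree of the form `y(x(A,B),C)` by `x(A,y(B,C))`. -/
inductive Rot : BinTree → BinTree → Prop
  | root (A B C : BinTree) : Rot (node (node A B) C) (node A (node B C))
  | left {L L' : BinTree} (R : BinTree) : Rot L L' → Rot (node L R) (node L' R)
  | right (L : BinTree) {R R' : BinTree} : Rot R R' → Rot (node L R) (node L R')

/-- The Tamari order: `TamariLE T T'` iff `T'` is obtained from `T` by a (possibly empty)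
sequence of right rotations. -/
def TamariLE (T T' : BinTree) : Prop := Relation.ReflTransGen Rot T T'

/-- The Tamari polynomial `B_T ∈ ℤ[x]`: `B_∅ = 1` and for `T = x(L,R)`, `B_T` is the
unique polynomial with `(x-1)·B_T = x·B_L·(x·B_R - B_R(1))` (exact division by the
monic polynomial `X - 1`, the right-hand side vanishing at `x = 1`). -/
noncomputable def tamPoly : BinTree → Polynomial ℤ
  | leaf => 1
  | node l r =>
      (X * tamPoly l * (X * tamPoly r - C ((tamPoly r).eval 1))) /ₘ (X - C 1)

/-- The mirror Tamari polynomial, obtained by exchanging the roles of the left and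
right subtrees in the recursive definition of the Tamari polynomial. -/
noncomputable def tamPolyMirror : BinTree → Polynomial ℤ
  | leaf => 1
  | node l r =>
      (X * tamPolyMirror r * (X * tamPolyMirror l - C ((tamPolyMirror l).eval 1))) /ₘ (X - C 1)

/-- The number of nodes on the left border of a binary tree. -/
def leftBorder : BinTree → ℕ
  | leaf => 0
  | node l _ => l.leftBorder + 1

/-- The number of nodes on the right border of a binary tree. -/
def rightBorder : BinTree → ℕ
  | leaf => 0
  | node _ r => r.rightBorder + 1

/-- `inSub T a b`: in the unique binary-search-tree labelling of `T` by `1,…,size T`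
(all labels of the left subtree of a node are smaller than its label, all labels of its
right subtree are larger), the node labelled `a` belongs to the subtree rooted at the
node labelled `b` (in particular `inSub T a a` holds for every node label `a`). -/
def inSub : BinTree → ℕ → ℕ → Prop
  | leaf => fun _ _ => False
  | node l r => fun a b =>
      (b = l.size + 1 ∧ 1 ≤ a ∧ a ≤ l.size + r.size + 1) ∨
      inSub l a b ∨
      (l.size + 1 < a ∧ l.size + 1 < b ∧ inSub r (a - (l.size + 1)) (b - (l.size + 1)))

/-- The binary search tree poset of `T`: `bstRel T a b` iff `a ≺_T b`, i.e. `a ≠ b` and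
the node labelled `a` is in the subtree rooted at the node labelled `b`. -/
def bstRel (T : BinTree) (a b : ℕ) : Prop := a ≠ b ∧ inSub T a b

/-- The increasing forest `inc(T)`: `a ≺ b` iff `a < b` and `a ≺_T b`. -/
def incRel (T : BinTree) (a b : ℕ) : Prop := a < b ∧ bstRel T a b

/-- The decreasing forest `dec(T)`: `b ≺ a` iff `b > a` and `b ≺_T a`. -/
def decRel (T : BinTree) (a b : ℕ) : Prop := b < a ∧ bstRel T a b

/-- The relations of the interval-poset `IP[T,T']`: exactly those of `dec(T)`
together with those of `inc(T')`. -/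
def IPrel (T T' : BinTree) (a b : ℕ) : Prop := decRel T a b ∨ incRel T' a b

end BinTree

open BinTree

/-- `σ` is a linear extension of the strict relation `rel` on `{1,…,n}`: reading the word
`σ(1)…σ(n)` (the `i`-th letter being the label `(σ i : ℕ) + 1`), whenever `rel a b` holds
the letter `a` appears before the letter `b`. -/
def IsLinExt (n : ℕ) (rel : ℕ → ℕ → Prop) (σ : Equiv.Perm (Fin n)) : Prop :=
  ∀ i j : Fin n, rel ((σ i : ℕ) + 1) ((σ j : ℕ) + 1) → i < j

/-- An interval-poset of size `n`: a (strict) poset on `{1,…,n}` such that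
`a ≺ c` implies `b ≺ c` for all `a < b < c`, and `c ≺ a` implies `b ≺ a` for all
`a < b < c`. -/
def IsIntervalPoset (n : ℕ) (rel : ℕ → ℕ → Prop) : Prop :=
  (∀ a b, rel a b → 1 ≤ a ∧ a ≤ n ∧ 1 ≤ b ∧ b ≤ n) ∧
  (∀ a, ¬ rel a a) ∧
  (∀ a b c, rel a b → rel b c → rel a c) ∧
  (∀ a b c, a < b → b < c → rel a c → rel b c) ∧
  (∀ a b c, a < b → b < c → rel c a → rel b a)

/-- `trees(P)` : the number of connected components of the forest formed by the decreasing
relations of `P`, i.e. the number of `k ∈ {1,…,n}` such that there is no `j < k`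
with `k ≺_P j`. -/
noncomputable def treeStat (n : ℕ) (rel : ℕ → ℕ → Prop) : ℕ :=
  Set.ncard {k : ℕ | 1 ≤ k ∧ k ≤ n ∧ ∀ j, j < k → ¬ rel k j}

/-- The composition `𝔹(I1,I2)` of two interval-posets of sizes `k1` and `k2`:
the set of interval-posets `I` of size `k1+k2+1` such that
(i) the relations of `I` among `1,…,k1` are exactly those of `I1`,
(ii) the relations of `I` among `k1+2,…,k1+k2+1` are exactly those of `I2` shifted
by `k1+1`, (iii) `i ≺_I k1+1` for all `i ≤ k1`, and (iv) there is no relation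
`k1+1 ≺_I j` for `j > k1+1`. -/
def Comp (k1 k2 : ℕ) (I1 I2 : ℕ → ℕ → Prop) : Set (ℕ → ℕ → Prop) :=
  {I | IsIntervalPoset (k1 + k2 + 1) I ∧
    (∀ a b, 1 ≤ a → a ≤ k1 → 1 ≤ b → b ≤ k1 → (I a b ↔ I1 a b)) ∧
    (∀ a b, k1 + 2 ≤ a → a ≤ k1 + k2 + 1 → k1 + 2 ≤ b → b ≤ k1 + k2 + 1 →
      (I a b ↔ I2 (a - (k1 + 1)) (b - (k1 + 1)))) ∧
    (∀ i, 1 ≤ i → i ≤ k1 → I i (k1 + 1)) ∧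
    (∀ j, k1 + 1 < j → ¬ I (k1 + 1) j)}

/-- The co-inversions of a permutation `σ` of `{1,…,n}` (written as the word
`σ(1)…σ(n)`): pairs `(σ(i), σ(j))` with `i < j` and `σ(i) > σ(j)`. -/
def coinv (n : ℕ) (σ : Equiv.Perm (Fin n)) : Set (Fin n × Fin n) :=
  {p | ∃ i j : Fin n, i < j ∧ σ j < σ i ∧ p = (σ i, σ j)}

-- ===== auxiliary development =====
open scoped Classical

noncomputable def rootFinset (n : ℕ) (I : ℕ → ℕ → Prop) : Finset ℕ :=
  (Finset.Icc 1 n).filter (fun k => ∀ j, j < k → ¬ I k j)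

lemma treeStat_eq_card (n : ℕ) (I : ℕ → ℕ → Prop) :
    treeStat n I = (rootFinset n I).card := by
  rw [treeStat, ← Set.ncard_coe_finset]
  congr 1
  ext k
  simp [rootFinset, Finset.mem_filter, Finset.mem_Icc, and_assoc]

def glue (a : ℕ) (I1 I2 : ℕ → ℕ → Prop) (m : ℕ) : ℕ → ℕ → Prop :=
  fun x y =>
    I1 x y ∨
    (a + 2 ≤ x ∧ a + 2 ≤ y ∧ I2 (x - (a+1)) (y - (a+1))) ∨
    (1 ≤ x ∧ x ≤ a ∧ y = a + 1) ∨
    (a + 2 ≤ x ∧ x ≤ a + 1 + m ∧ y = a + 1)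

noncomputable def validM (b : ℕ) (I2 : ℕ → ℕ → Prop) : Finset ℕ :=
  (Finset.range (b+1)).filter (fun m => m = b ∨ ∀ j, j < m + 1 → ¬ I2 (m+1) j)

lemma validM_closure {b : ℕ} {I2 : ℕ → ℕ → Prop} {m : ℕ}
    (h2 : IsIntervalPoset b I2) (hm : m ∈ validM b I2)
    {x y : ℕ} (hxy : I2 x y) (hy : y ≤ m) : x ≤ m := by
  simp only [validM, Finset.mem_filter, Finset.mem_range] at hm
  obtain ⟨-, hm2 | hm2⟩ := hm
  · subst hm2; exact (h2.1 x y hxy).2.1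
  · by_contra hx
    push_neg at hx
    rcases eq_or_lt_of_le (Nat.succ_le_of_lt hx) with h | h
    · exact hm2 y (lt_of_le_of_lt hy (Nat.lt_succ_self m)) (by have : m + 1 = x := h; rw [this]; exact hxy)
    · exact hm2 y (lt_of_le_of_lt hy (Nat.lt_succ_self m))
        (h2.2.2.2.2 y (m+1) x (Nat.lt_succ_of_le hy) h hxy)

lemma glue_isIP {a b : ℕ} {I1 I2 : ℕ → ℕ → Prop} {m : ℕ}
    (h1 : IsIntervalPoset a I1) (h2 : IsIntervalPoset b I2)
    (hm : m ∈ validM b I2) :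
    IsIntervalPoset (a + b + 1) (glue a I1 I2 m) := by
  have hmb : m ≤ b := by
    simp only [validM, Finset.mem_filter, Finset.mem_range] at hm; omega
  obtain ⟨bd1, ir1, tr1, c41, c51⟩ := h1
  obtain ⟨bd2, ir2, tr2, c42, c52⟩ := h2
  refine ⟨?_, ?_, ?_, ?_, ?_⟩
  · rintro x y (h | ⟨hx, hy, h⟩ | ⟨hx, hx2, hy⟩ | ⟨hx, hx2, hy⟩)
    · have := bd1 x y h; omega
    · have := bd2 _ _ h; omega
    · omega
    · omega
  · rintro x (h | ⟨hx, hy, h⟩ | h | h)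
    · exact ir1 x h
    · exact ir2 _ h
    · omega
    · omega
  · rintro x y z (h | ⟨hx, hy, h⟩ | ⟨hx, hx2, hy⟩ | ⟨hx, hx2, hy⟩) hyz
    · -- I1 x y
      have hb := bd1 x y h
      rcases hyz with h' | ⟨hy', hz, h'⟩ | ⟨hy', hy2, hz⟩ | ⟨hy', hy2, hz⟩
      · exact Or.inl (tr1 x y z h h')
      · omega
      · exact Or.inr (Or.inr (Or.inl ⟨hb.1, by omega, hz⟩))
      · omega
    · -- I2 part
      have hb := bd2 _ _ h
      rcases hyz with h' | ⟨hy', hz, h'⟩ | ⟨hy', hy2, hz⟩ | ⟨hy', hy2, hz⟩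
      · have := bd1 y z h'; omega
      · exact Or.inr (Or.inl ⟨hx, hz, tr2 _ _ _ h h'⟩)
      · omega
      · refine Or.inr (Or.inr (Or.inr ⟨hx, ?_, hz⟩))
        have : x - (a+1) ≤ m := validM_closure ⟨bd2, ir2, tr2, c42, c52⟩ hm h (by omega)
        omega
    · -- y = a+1 : no outgoing relation from a+1
      subst hy
      rcases hyz with h' | ⟨hy', hz, h'⟩ | ⟨hy', hy2, hz⟩ | ⟨hy', hy2, hz⟩
      · have := bd1 _ _ h'; omega
      · omega
      · omega
      · omega
    · subst hy
      rcases hyz with h' | ⟨hy', hz, h'⟩ | ⟨hy', hy2, hz⟩ | ⟨hy', hy2, hz⟩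
      · have := bd1 _ _ h'; omega
      · omega
      · omega
      · omega
  · rintro x y z hxy hyz (h | ⟨hx, hz, h⟩ | ⟨hx, hx2, hz⟩ | ⟨hx, hx2, hz⟩)
    · have hb := bd1 x z h
      exact Or.inl (c41 x y z hxy hyz h)
    · refine Or.inr (Or.inl ⟨by omega, hz, ?_⟩)
      have := c42 (x - (a+1)) (y - (a+1)) (z - (a+1)) (by omega) (by omega) h
      exact this
    · exact Or.inr (Or.inr (Or.inl ⟨by omega, by omega, hz⟩))
    · omega
  · rintro x y z hxy hyz (h | ⟨hz, hx, h⟩ | ⟨hz, hz2, hx⟩ | ⟨hz, hz2, hx⟩)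
    · have hb := bd1 z x h
      exact Or.inl (c51 x y z hxy hyz h)
    · refine Or.inr (Or.inl ⟨by omega, by omega, ?_⟩)
      exact c52 (x - (a+1)) (y - (a+1)) (z - (a+1)) (by omega) (by omega) h
    · omega
    · exact Or.inr (Or.inr (Or.inr ⟨by omega, by omega, hx⟩))

def IsPivot (I : ℕ → ℕ → Prop) (c : ℕ) : Prop :=
  1 ≤ c ∧ (∀ i, 1 ≤ i → i < c → I i c) ∧ (∀ j, ¬ I c j)

lemma pivot_unique {I : ℕ → ℕ → Prop} {c c' : ℕ}
    (h : IsPivot I c) (h' : IsPivot I c') : c = c' := by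
  by_contra hne
  rcases Nat.lt_or_ge c c' with hlt | hge
  · exact h.2.2 c' (h'.2.1 c h.1 hlt)
  · rcases Nat.lt_or_ge c' c with hlt | hge'
    · exact h'.2.2 c (h.2.1 c' h'.1 hlt)
    · omega

lemma glue_pivot {a b : ℕ} {I1 I2 : ℕ → ℕ → Prop} {m : ℕ}
    (h1 : IsIntervalPoset a I1) (h2 : IsIntervalPoset b I2) :
    IsPivot (glue a I1 I2 m) (a + 1) := by
  refine ⟨by omega, ?_, ?_⟩
  · intro i hi hilt
    exact Or.inr (Or.inr (Or.inl ⟨hi, by omega, rfl⟩))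
  · rintro j (h | ⟨hx, hy, h⟩ | ⟨hx, hx2, hy⟩ | ⟨hx, hx2, hy⟩)
    · have := h1.1 _ _ h; omega
    · omega
    · omega
    · omega

lemma glue_rel_left {a : ℕ} {I1 I2 : ℕ → ℕ → Prop} {m : ℕ} {x y : ℕ} (hy : y ≤ a) :
    glue a I1 I2 m x y ↔ I1 x y := by
  constructor
  · rintro (h | ⟨hx, hy', h⟩ | ⟨hx, hx2, hy'⟩ | ⟨hx, hx2, hy'⟩)
    · exact h
    · omega
    · omega
    · omega
  · exact Or.inl

lemma glue_rel_right {a : ℕ} {I1 I2 : ℕ → ℕ → Prop} {m : ℕ} {x y : ℕ}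
    (h1 : IsIntervalPoset a I1) (hy : a + 2 ≤ y) :
    glue a I1 I2 m x y ↔ a + 2 ≤ x ∧ I2 (x - (a+1)) (y - (a+1)) := by
  constructor
  · rintro (h | ⟨hx, hy', h⟩ | ⟨hx, hx2, hy'⟩ | ⟨hx, hx2, hy'⟩)
    · have := h1.1 _ _ h; omega
    · exact ⟨hx, h⟩
    · omega
    · omega
  · rintro ⟨hx, h⟩
    exact Or.inr (Or.inl ⟨hx, hy, h⟩)

lemma glue_rel_pivot {a b : ℕ} {I1 I2 : ℕ → ℕ → Prop} {m : ℕ} {x : ℕ}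
    (h1 : IsIntervalPoset a I1) (h2 : IsIntervalPoset b I2) :
    glue a I1 I2 m x (a + 1) ↔ (1 ≤ x ∧ x ≤ a) ∨ (a + 2 ≤ x ∧ x ≤ a + 1 + m) := by
  constructor
  · rintro (h | ⟨hx, hy', h⟩ | ⟨hx, hx2, hy'⟩ | ⟨hx, hx2, hy'⟩)
    · have := h1.1 _ _ h; omega
    · omega
    · exact Or.inl ⟨hx, hx2⟩
    · exact Or.inr ⟨hx, hx2⟩
  · rintro (⟨hx, hx2⟩ | ⟨hx, hx2⟩)
    · exact Or.inr (Or.inr (Or.inl ⟨hx, hx2, rfl⟩))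
    · exact Or.inr (Or.inr (Or.inr ⟨hx, hx2, rfl⟩))

noncomputable def pivotOf (n : ℕ) (I : ℕ → ℕ → Prop) : ℕ :=
  sSup {c | c ≤ n ∧ ∀ i, 1 ≤ i → i < c → I i c}

lemma pivotOf_spec {n : ℕ} {I : ℕ → ℕ → Prop} (h : IsIntervalPoset n I) (hn : 1 ≤ n) :
    IsPivot I (pivotOf n I) ∧ pivotOf n I ≤ n := by
  obtain ⟨bd, ir, tr, c4, c5⟩ := h
  set S : Set ℕ := {c | c ≤ n ∧ ∀ i, 1 ≤ i → i < c → I i c} with hS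
  have hne : S.Nonempty := ⟨1, hn, by intro i hi hilt; omega⟩
  have hbdd : BddAbove S := ⟨n, fun c hc => hc.1⟩
  have hmem : pivotOf n I ∈ S := Nat.sSup_mem hne hbdd
  have hgr : ∀ c ∈ S, c ≤ pivotOf n I := fun c hc => le_csSup hbdd hc
  obtain ⟨hle, hinc⟩ := hmem
  have h1 : 1 ≤ pivotOf n I := hgr 1 ⟨hn, by intro i hi hilt; omega⟩
  refine ⟨⟨h1, hinc, ?_⟩, hle⟩
  intro j hj
  set c := pivotOf n I with hc
  have hbj := bd _ _ hj
  have hjc : j ≠ c := fun h => ir c (h ▸ hj)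
  rcases Nat.lt_or_ge j c with hlt | hge
  · exact ir c (tr c j c hj (hinc j (by omega) hlt))
  · have hcj : c < j := by omega
    have hPj : j ∈ S := by
      refine ⟨by omega, ?_⟩
      intro i hi hij
      rcases Nat.lt_trichotomy i c with h' | h' | h'
      · exact tr i c j (hinc i hi h') hj
      · subst h'; exact hj
      · exact c4 c i j h' hij hj
    have := hgr j hPj
    omega

def leftPart (a : ℕ) (I : ℕ → ℕ → Prop) : ℕ → ℕ → Prop :=
  fun x y => x ≤ a ∧ y ≤ a ∧ I x y

def rightPart (c b : ℕ) (I : ℕ → ℕ → Prop) : ℕ → ℕ → Prop :=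
  fun x y => 1 ≤ x ∧ x ≤ b ∧ 1 ≤ y ∧ y ≤ b ∧ I (x + c) (y + c)

noncomputable def mOf (c b : ℕ) (I : ℕ → ℕ → Prop) : ℕ :=
  sSup {j | j ≤ b ∧ ∀ i, 1 ≤ i → i ≤ j → I (c + i) c}

lemma leftPart_isIP {n a : ℕ} {I : ℕ → ℕ → Prop} (h : IsIntervalPoset n I) :
    IsIntervalPoset a (leftPart a I) := by
  obtain ⟨bd, ir, tr, c4, c5⟩ := h
  refine ⟨?_, ?_, ?_, ?_, ?_⟩
  · rintro x y ⟨hx, hy, hxy⟩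
    have := bd _ _ hxy; exact ⟨this.1, hx, this.2.2.1, hy⟩
  · rintro x ⟨-, -, hxx⟩; exact ir x hxx
  · rintro x y z ⟨hx, hy, hxy⟩ ⟨-, hz, hyz⟩
    exact ⟨hx, hz, tr _ _ _ hxy hyz⟩
  · rintro x y z hxy hyz ⟨hx, hz, hxz⟩
    exact ⟨by omega, hz, c4 _ _ _ hxy hyz hxz⟩
  · rintro x y z hxy hyz ⟨hz, hx, hzx⟩
    exact ⟨by omega, hx, c5 _ _ _ hxy hyz hzx⟩

lemma rightPart_isIP {n c b : ℕ} {I : ℕ → ℕ → Prop} (h : IsIntervalPoset n I) :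
    IsIntervalPoset b (rightPart c b I) := by
  obtain ⟨bd, ir, tr, c4, c5⟩ := h
  refine ⟨?_, ?_, ?_, ?_, ?_⟩
  · rintro x y ⟨hx, hx2, hy, hy2, hxy⟩
    exact ⟨hx, hx2, hy, hy2⟩
  · rintro x ⟨-, -, -, -, hxx⟩; exact ir _ hxx
  · rintro x y z ⟨hx, hx2, hy, hy2, hxy⟩ ⟨-, -, hz, hz2, hyz⟩
    exact ⟨hx, hx2, hz, hz2, tr _ _ _ hxy hyz⟩
  · rintro x y z hxy hyz ⟨hx, hx2, hz, hz2, hxz⟩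
    exact ⟨by omega, by omega, hz, hz2, c4 _ _ _ (by omega) (by omega) hxz⟩
  · rintro x y z hxy hyz ⟨hz, hz2, hx, hx2, hzx⟩
    exact ⟨by omega, by omega, hx, hx2, c5 _ _ _ (by omega) (by omega) hzx⟩

lemma mOf_spec {n c b : ℕ} {I : ℕ → ℕ → Prop} (h : IsIntervalPoset n I)
    (hc : IsPivot I c) (hb : b = n - c) (hcn : c ≤ n) :
    mOf c b I ≤ b ∧ (∀ i, 1 ≤ i → i ≤ mOf c b I → I (c + i) c) ∧
    (∀ j, mOf c b I < j → ¬ I (c + j) c) := by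
  obtain ⟨bd, ir, tr, c4, c5⟩ := h
  set S : Set ℕ := {j | j ≤ b ∧ ∀ i, 1 ≤ i → i ≤ j → I (c + i) c} with hS
  have hne : S.Nonempty := ⟨0, by omega, by intro i hi hilt; omega⟩
  have hbdd : BddAbove S := ⟨b, fun j hj => hj.1⟩
  have hmem : mOf c b I ∈ S := Nat.sSup_mem hne hbdd
  refine ⟨hmem.1, hmem.2, ?_⟩
  intro j hj hrel
  have hbj := bd _ _ hrel
  have hjS : j ∈ S := by
    refine ⟨by omega, ?_⟩
    intro i hi hij
    rcases Nat.eq_or_lt_of_le hij with h' | h'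
    · subst h'; exact hrel
    · exact c5 c (c + i) (c + j) (by omega) (by omega) hrel
  have h2 : j ≤ mOf c b I := le_csSup hbdd hjS
  omega

lemma mOf_valid {n c b : ℕ} {I : ℕ → ℕ → Prop} (h : IsIntervalPoset n I)
    (hc : IsPivot I c) (hb : b = n - c) (hcn : c ≤ n) :
    mOf c b I ∈ validM b (rightPart c b I) := by
  obtain ⟨hm1, hm2, hm3⟩ := mOf_spec h hc hb hcn
  simp only [validM, Finset.mem_filter, Finset.mem_range]
  refine ⟨by omega, ?_⟩
  rcases Nat.eq_or_lt_of_le hm1 with h' | h'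
  · exact Or.inl h'
  · refine Or.inr ?_
    rintro j hj ⟨hx, hx2, hy, hy2, hrel⟩
    have hrel' : I (c + (mOf c b I + 1)) (c + j) := by
      rwa [show mOf c b I + 1 + c = c + (mOf c b I + 1) by omega,
        show j + c = c + j by omega] at hrel
    have : I (c + (mOf c b I + 1)) c := h.2.2.1 _ _ _ hrel' (hm2 j hy (by omega))
    exact hm3 _ (by omega) this

lemma glue_decompose {n c : ℕ} {I : ℕ → ℕ → Prop} (h : IsIntervalPoset n I)
    (hc : IsPivot I c) (hcn : c ≤ n) :
    glue (c - 1) (leftPart (c - 1) I) (rightPart c (n - c) I) (mOf c (n - c) I) = I := by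
  obtain ⟨h1, hinc, hout⟩ := hc
  obtain ⟨hm1, hm2, hm3⟩ := mOf_spec h ⟨h1, hinc, hout⟩ rfl hcn
  obtain ⟨bd, ir, tr, c4, c5⟩ := h
  set a := c - 1 with ha
  set b := n - c with hb
  set m := mOf c b I with hmm
  have hca : c = a + 1 := by omega
  funext x y
  apply propext
  constructor
  · rintro (⟨hx, hy, hxy⟩ | ⟨hx, hy, h'⟩ | ⟨hx, hx2, hy⟩ | ⟨hx, hx2, hy⟩)
    · exact hxy
    · have := h'.2.2.2.2
      have ex : x - (a+1) + c = x := by omega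
      have ey : y - (a+1) + c = y := by omega
      rwa [ex, ey] at this
    · rw [hy, ← hca]; exact hinc x hx (by omega)
    · rw [hy, ← hca]
      have := hm2 (x - c) (by omega) (by omega)
      have ex : c + (x - c) = x := by omega
      rwa [ex] at this
  · intro hxy
    have hbx := bd _ _ hxy
    rcases Nat.lt_trichotomy y c with hyc | hyc | hyc
    · -- y < c : x must be < c too
      rcases Nat.lt_trichotomy x c with hxc | hxc | hxc
      · exact Or.inl ⟨by omega, by omega, hxy⟩
      · exact absurd hxy (hxc ▸ hout y)
      · exact absurd hxy (fun hh => hout y (c5 y c x hyc hxc hh))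
    · -- y = c
      subst hyc
      rcases Nat.lt_trichotomy x y with hxc | hxc | hxc
      · exact Or.inr (Or.inr (Or.inl ⟨by omega, by omega, by omega⟩))
      · exact absurd hxy (fun hh => ir _ (hxc ▸ hh))
      · refine Or.inr (Or.inr (Or.inr ⟨by omega, ?_, by omega⟩))
        have hxm : x - y ≤ m := by
          by_contra hcon
          push_neg at hcon
          have ex : y + (x - y) = x := by omega
          exact hm3 (x - y) hcon (by rwa [ex])
        omega
    · -- y > c : x must be > c
      rcases Nat.lt_trichotomy x c with hxc | hxc | hxc
      · exact absurd hxy (fun hh => hout y (c4 x c y hxc hyc hh))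
      · exact absurd hxy (hxc ▸ hout y)
      · refine Or.inr (Or.inl ⟨by omega, by omega, ?_⟩)
        refine ⟨by omega, by omega, by omega, by omega, ?_⟩
        have ex : x - (a+1) + c = x := by omega
        have ey : y - (a+1) + c = y := by omega
        rw [ex, ey]; exact hxy

lemma rootFinset_glue {a b : ℕ} {I1 I2 : ℕ → ℕ → Prop} {m : ℕ}
    (h1 : IsIntervalPoset a I1) (h2 : IsIntervalPoset b I2) :
    rootFinset (a+b+1) (glue a I1 I2 m) =
      (rootFinset a I1 ∪ {a+1}) ∪
        ((rootFinset b I2).filter (fun r => m < r)).image (fun r => r + (a+1)) := by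
  ext k
  simp only [rootFinset, Finset.mem_union, Finset.mem_filter, Finset.mem_Icc,
    Finset.mem_image, Finset.mem_singleton]
  constructor
  · rintro ⟨⟨hk1, hk2⟩, hp⟩
    rcases Nat.lt_trichotomy k (a+1) with h | h | h
    · left; left
      exact ⟨⟨hk1, by omega⟩, fun j hj hI1 => hp j hj (Or.inl hI1)⟩
    · left; right; exact h
    · right
      refine ⟨k - (a+1), ⟨⟨⟨by omega, by omega⟩, ?_⟩, ?_⟩, by omega⟩
      · intro j hj hI2
        have hbj := h2.1 _ _ hI2
        apply hp (j + (a+1)) (by omega)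
        refine Or.inr (Or.inl ⟨by omega, by omega, ?_⟩)
        rwa [Nat.add_sub_cancel]
      · by_contra hcon
        push_neg at hcon
        exact hp (a+1) (by omega) (Or.inr (Or.inr (Or.inr ⟨by omega, by omega, rfl⟩)))
  · rintro ((⟨⟨hk1, hk2⟩, hp⟩ | rfl) | ⟨r, hr, rfl⟩)
    · refine ⟨⟨hk1, by omega⟩, ?_⟩
      rintro j hj (hI1 | ⟨hx, hy, h⟩ | ⟨hx, hx2, hy⟩ | ⟨hx, hx2, hy⟩)
      · exact hp j hj hI1
      · omega
      · omega
      · omega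
    · refine ⟨⟨by omega, by omega⟩, ?_⟩
      intro j hj h
      exact (glue_pivot (m := m) h1 h2).2.2 j h
    · obtain ⟨⟨⟨hr1, hr2⟩, hp⟩, hmr⟩ := hr
      refine ⟨⟨by omega, by omega⟩, ?_⟩
      rintro j hj (hI1 | ⟨hx, hy, h⟩ | ⟨hx, hx2, hy⟩ | ⟨hx, hx2, hy⟩)
      · have := h1.1 _ _ hI1; omega
      · rw [Nat.add_sub_cancel] at h
        exact hp (j - (a+1)) (by omega) h
      · omega
      · omega

lemma treeStat_glue {a b : ℕ} {I1 I2 : ℕ → ℕ → Prop} {m : ℕ}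
    (h1 : IsIntervalPoset a I1) (h2 : IsIntervalPoset b I2) :
    treeStat (a+b+1) (glue a I1 I2 m) =
      treeStat a I1 + 1 + (((rootFinset b I2).filter (fun r => m < r)).card) := by
  rw [treeStat_eq_card, treeStat_eq_card, rootFinset_glue h1 h2]
  have hsub1 : ∀ k ∈ rootFinset a I1, k ≤ a := by
    intro k hk
    simp only [rootFinset, Finset.mem_filter, Finset.mem_Icc] at hk
    exact hk.1.2
  have hd1 : Disjoint (rootFinset a I1) ({a+1} : Finset ℕ) := by
    rw [Finset.disjoint_singleton_right]
    intro h
    have := hsub1 _ h; omega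
  have hd2 : Disjoint (rootFinset a I1 ∪ {a+1})
      (((rootFinset b I2).filter (fun r => m < r)).image (fun r => r + (a+1))) := by
    rw [Finset.disjoint_right]
    intro k hk
    simp only [Finset.mem_image, Finset.mem_filter, rootFinset, Finset.mem_Icc] at hk
    obtain ⟨r, ⟨⟨⟨hr1, hr2⟩, -⟩, -⟩, rfl⟩ := hk
    simp only [Finset.mem_union, Finset.mem_singleton]
    rintro (h | h)
    · have := hsub1 _ h; omega
    · omega
  rw [Finset.card_union_of_disjoint hd2, Finset.card_union_of_disjoint hd1,
    Finset.card_image_of_injective _ (add_left_injective (a+1)),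
    Finset.card_singleton]

lemma pivotOf_glue {a b : ℕ} {I1 I2 : ℕ → ℕ → Prop} {m : ℕ}
    (h1 : IsIntervalPoset a I1) (h2 : IsIntervalPoset b I2) (hm : m ∈ validM b I2) :
    pivotOf (a+b+1) (glue a I1 I2 m) = a + 1 :=
  pivot_unique (pivotOf_spec (glue_isIP h1 h2 hm) (by omega)).1 (glue_pivot h1 h2)

lemma leftPart_glue {a : ℕ} {I1 I2 : ℕ → ℕ → Prop} {m : ℕ}
    (h1 : IsIntervalPoset a I1) :
    leftPart a (glue a I1 I2 m) = I1 := by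
  funext x y
  apply propext
  constructor
  · rintro ⟨hx, hy, hxy⟩
    exact (glue_rel_left hy).1 hxy
  · intro h
    have := h1.1 _ _ h
    exact ⟨by omega, by omega, Or.inl h⟩

lemma rightPart_glue {a b : ℕ} {I1 I2 : ℕ → ℕ → Prop} {m : ℕ}
    (h1 : IsIntervalPoset a I1) (h2 : IsIntervalPoset b I2) :
    rightPart (a+1) b (glue a I1 I2 m) = I2 := by
  funext x y
  apply propext
  constructor
  · rintro ⟨hx, hx2, hy, hy2, hxy⟩
    have := (glue_rel_right h1 (by omega)).1 hxy
    rw [Nat.add_sub_cancel, Nat.add_sub_cancel] at this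
    exact this.2
  · intro h
    have hb := h2.1 _ _ h
    refine ⟨hb.1, hb.2.1, hb.2.2.1, hb.2.2.2, ?_⟩
    refine (glue_rel_right h1 (by omega)).2 ⟨by omega, ?_⟩
    rwa [Nat.add_sub_cancel, Nat.add_sub_cancel]

lemma mOf_glue {a b : ℕ} {I1 I2 : ℕ → ℕ → Prop} {m : ℕ}
    (h1 : IsIntervalPoset a I1) (h2 : IsIntervalPoset b I2) (hm : m ∈ validM b I2) :
    mOf (a+1) b (glue a I1 I2 m) = m := by
  have hmb : m ≤ b := by
    simp only [validM, Finset.mem_filter, Finset.mem_range] at hm; omega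
  have hiff : ∀ i, 1 ≤ i → (glue a I1 I2 m ((a+1) + i) (a+1) ↔ i ≤ m) := by
    intro i hi
    rw [glue_rel_pivot h1 h2]
    omega
  have hSeq : {j | j ≤ b ∧ ∀ i, 1 ≤ i → i ≤ j → glue a I1 I2 m ((a+1) + i) (a+1)} =
      Set.Iic m := by
    ext j
    simp only [Set.mem_setOf_eq, Set.mem_Iic]
    constructor
    · rintro ⟨hjb, hj⟩
      rcases Nat.eq_zero_or_pos j with rfl | hj0
      · omega
      · exact (hiff j hj0).1 (hj j hj0 le_rfl)
    · intro hjm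
      exact ⟨by omega, fun i hi hij => (hiff i hi).2 (by omega)⟩
  rw [mOf, hSeq]
  exact csSup_Iic

lemma validM_card {b : ℕ} {I2 : ℕ → ℕ → Prop} (h2 : IsIntervalPoset b I2) :
    (validM b I2).card = (rootFinset b I2).card + 1 := by
  have : validM b I2 = insert b ((rootFinset b I2).image (fun r => r - 1)) := by
    ext m
    simp only [validM, Finset.mem_filter, Finset.mem_range, Finset.mem_insert,
      Finset.mem_image, rootFinset, Finset.mem_Icc]
    constructor
    · rintro ⟨hmb, rfl | hroot⟩
      · exact Or.inl rfl
      · rcases Nat.eq_or_lt_of_le (Nat.lt_succ_iff.1 hmb) with h | h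
        · exact Or.inl h
        · exact Or.inr ⟨m + 1, ⟨⟨by omega, by omega⟩, hroot⟩, by omega⟩
    · rintro (rfl | ⟨r, ⟨⟨hr1, hr2⟩, hroot⟩, rfl⟩)
      · exact ⟨by omega, Or.inl rfl⟩
      · refine ⟨by omega, Or.inr ?_⟩
        rwa [show r - 1 + 1 = r by omega]
  rw [this, Finset.card_insert_of_notMem, Finset.card_image_of_injOn]
  · intro r hr r' hr' hrr
    simp only [rootFinset, Finset.mem_coe, Finset.mem_filter, Finset.mem_Icc] at hr hr'
    have hrr' : r - 1 = r' - 1 := hrr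
    omega
  · simp only [Finset.mem_image, rootFinset, Finset.mem_filter, Finset.mem_Icc]
    rintro ⟨r, ⟨⟨hr1, hr2⟩, -⟩, hr⟩
    omega

lemma sum_valid_geom {b : ℕ} {I2 : ℕ → ℕ → Prop} (h2 : IsIntervalPoset b I2)
    {R : Type*} [CommRing R] (x : R) :
    ∑ m ∈ validM b I2, x ^ (((rootFinset b I2).filter (fun r => m < r)).card) =
      ∑ k ∈ Finset.range ((rootFinset b I2).card + 1), x ^ k := by
  set g : ℕ → ℕ := fun m => ((rootFinset b I2).filter (fun r => m < r)).card with hg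
  have hinj : ∀ m ∈ validM b I2, ∀ m' ∈ validM b I2, g m = g m' → m = m' := by
    have key : ∀ m m', m ∈ validM b I2 → m' ∈ validM b I2 → m < m' → g m' < g m := by
      intro m m' hmv hm'v hlt
      simp only [validM, Finset.mem_filter, Finset.mem_range] at hmv hm'v
      have hroot : ∀ j, j < m + 1 → ¬ I2 (m+1) j := by
        rcases hmv.2 with h | h
        · omega
        · exact h
      have hmem : m + 1 ∈ (rootFinset b I2).filter (fun r => m < r) := by
        simp only [Finset.mem_filter, rootFinset, Finset.mem_Icc]
        exact ⟨⟨⟨by omega, by omega⟩, hroot⟩, by omega⟩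
      have hnotmem : m + 1 ∉ (rootFinset b I2).filter (fun r => m' < r) := by
        simp only [Finset.mem_filter, rootFinset, Finset.mem_Icc]
        rintro ⟨-, h⟩; omega
      have hsub : (rootFinset b I2).filter (fun r => m' < r) ⊆
          (rootFinset b I2).filter (fun r => m < r) := by
        intro r hr
        simp only [Finset.mem_filter] at hr ⊢
        exact ⟨hr.1, by omega⟩
      exact Finset.card_lt_card (Finset.ssubset_iff_of_subset hsub |>.2 ⟨m+1, hmem, hnotmem⟩)
    intro m hm m' hm' heq
    rcases Nat.lt_trichotomy m m' with h | h | h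
    · exact absurd heq (Nat.ne_of_gt (key m m' hm hm' h))
    · exact h
    · exact absurd heq (Nat.ne_of_lt (key m' m hm' hm h))
  have himage : (validM b I2).image g = Finset.range ((rootFinset b I2).card + 1) := by
    apply Finset.eq_of_subset_of_card_le
    · intro k hk
      simp only [Finset.mem_image] at hk
      obtain ⟨m, hm, rfl⟩ := hk
      simp only [Finset.mem_range, hg, Nat.lt_succ_iff]
      exact Finset.card_le_card (Finset.filter_subset _ _)
    · rw [Finset.card_range, Finset.card_image_of_injOn hinj, validM_card h2]
  calc ∑ m ∈ validM b I2, x ^ (g m)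
      = ∑ k ∈ (validM b I2).image g, x ^ k := (Finset.sum_image hinj).symm
    _ = _ := by rw [himage]


/-- For `n ≥ 0` let `Φ_n(x) = Σ_I x^{trees(I)}`, the sum running over all
interval-posets `I` of size `n`. Then `Φ_0 = 1` and for every `n ≥ 1`,
`(x−1)·Φ_n(x) = Σ_{a+b=n−1} x·Φ_a(x)·(x·Φ_b(x) − Φ_b(1))`. -/
theorem phi_functional_equation (s : ℕ → Finset (ℕ → ℕ → Prop))
    (hs : ∀ n (I : ℕ → ℕ → Prop), I ∈ s n ↔ IsIntervalPoset n I)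
    (Φ : ℕ → Polynomial ℤ)
    (hΦ : ∀ n, Φ n = ∑ I ∈ s n, (Polynomial.X : Polynomial ℤ) ^ treeStat n I) :
    Φ 0 = 1 ∧
    ∀ n, 1 ≤ n →
      (Polynomial.X - 1) * Φ n =
        ∑ q ∈ Finset.HasAntidiagonal.antidiagonal (n - 1),
          Polynomial.X * Φ q.1 *
            (Polynomial.X * Φ q.2 - Polynomial.C ((Φ q.2).eval 1)) := by
  constructor
  · -- Φ 0 = 1
    have hempty : s 0 = {fun _ _ => False} := by
      ext I
      rw [hs]
      simp only [Finset.mem_singleton]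
      constructor
      · intro h
        funext x y
        apply propext
        simp only [iff_false]
        intro hxy
        have := h.1 _ _ hxy; omega
      · rintro rfl
        exact ⟨fun a b h => h.elim, fun a h => h, fun a b c h => h.elim,
          fun a b c _ _ h => h.elim, fun a b c _ _ h => h.elim⟩
    rw [hΦ 0, hempty, Finset.sum_singleton]
    have h0 : treeStat 0 (fun _ _ => False) = 0 := by
      rw [treeStat_eq_card]
      simp [rootFinset]
    rw [h0, pow_zero]
  · intro n hn
    obtain ⟨N, rfl⟩ : ∃ N, n = N + 1 := ⟨n - 1, by omega⟩
    simp only [Nat.add_sub_cancel]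
    set D := (Finset.HasAntidiagonal.antidiagonal N).sigma
      (fun q : ℕ × ℕ => ((s q.1) ×ˢ (s q.2)).sigma
        (fun p : (ℕ → ℕ → Prop) × (ℕ → ℕ → Prop) => validM q.2 p.2)) with hD
    set f : ((_ : ℕ × ℕ) × (_ : (ℕ → ℕ → Prop) × (ℕ → ℕ → Prop)) × ℕ) → Polynomial ℤ :=
      fun t => Polynomial.X ^
        (treeStat t.1.1 t.2.1.1 + 1 +
          (((rootFinset t.1.2 t.2.1.2).filter (fun r => t.2.2 < r)).card)) with hf
    have e1 : ∑ t ∈ D, f t = ∑ I ∈ s (N+1), (Polynomial.X : Polynomial ℤ) ^ treeStat (N+1) I := by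
      apply Finset.sum_bij'
        (i := fun t (_ : t ∈ D) => glue t.1.1 t.2.1.1 t.2.1.2 t.2.2)
        (j := fun I (_ : I ∈ s (N+1)) =>
          ⟨(pivotOf (N+1) I - 1, (N+1) - pivotOf (N+1) I),
            (leftPart (pivotOf (N+1) I - 1) I,
             rightPart (pivotOf (N+1) I) ((N+1) - pivotOf (N+1) I) I),
            mOf (pivotOf (N+1) I) ((N+1) - pivotOf (N+1) I) I⟩)
      · -- hi
        rintro ⟨⟨a, b⟩, ⟨I1, I2⟩, m⟩ ht
        rw [hD] at ht
        simp only [Finset.mem_sigma, Finset.mem_product, Finset.HasAntidiagonal.mem_antidiagonal] at ht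
        obtain ⟨hq, ⟨h1s, h2s⟩, hmv⟩ := ht
        rw [hs]
        rw [show N + 1 = a + b + 1 by omega]
        exact glue_isIP ((hs _ _).1 h1s) ((hs _ _).1 h2s) hmv
      · -- hj
        intro I hI
        have hIP := (hs _ _).1 hI
        obtain ⟨hpiv, hle⟩ := pivotOf_spec hIP (by omega)
        rw [hD]
        refine Finset.mem_sigma.2 ⟨?_, Finset.mem_sigma.2 ⟨Finset.mem_product.2 ⟨?_, ?_⟩, ?_⟩⟩
        · simp only [Finset.HasAntidiagonal.mem_antidiagonal]
          have := hpiv.1; omega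
        · exact (hs _ _).2 (leftPart_isIP hIP)
        · exact (hs _ _).2 (rightPart_isIP hIP)
        · exact mOf_valid hIP hpiv rfl hle
      · -- left inverse
        rintro ⟨⟨a, b⟩, ⟨I1, I2⟩, m⟩ ht
        rw [hD] at ht
        simp only [Finset.mem_sigma, Finset.mem_product, Finset.HasAntidiagonal.mem_antidiagonal] at ht
        obtain ⟨hq, ⟨h1s, h2s⟩, hmv⟩ := ht
        have h1 := (hs _ _).1 h1s
        have h2 := (hs _ _).1 h2s
        subst hq
        have hp : pivotOf (a + b + 1) (glue a I1 I2 m) = a + 1 := pivotOf_glue h1 h2 hmv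
        have eb : a + b + 1 - (a + 1) = b := by omega
        simp only [hp, Nat.add_sub_cancel, eb]
        rw [leftPart_glue h1, rightPart_glue h1 h2, mOf_glue h1 h2 hmv]
      · -- right inverse
        intro I hI
        have hIP := (hs _ _).1 hI
        obtain ⟨hpiv, hle⟩ := pivotOf_spec hIP (by omega)
        exact glue_decompose hIP hpiv hle
      · -- values
        rintro ⟨⟨a, b⟩, ⟨I1, I2⟩, m⟩ ht
        rw [hD] at ht
        simp only [Finset.mem_sigma, Finset.mem_product, Finset.HasAntidiagonal.mem_antidiagonal] at ht
        obtain ⟨hq, ⟨h1s, h2s⟩, hmv⟩ := ht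
        have h1 := (hs _ _).1 h1s
        have h2 := (hs _ _).1 h2s
        subst hq
        rw [hf]
        simp only
        rw [show a + b + 1 = a + b + 1 from rfl, treeStat_glue h1 h2]
    have e2 : ∑ t ∈ D, f t =
        ∑ q ∈ Finset.HasAntidiagonal.antidiagonal N, ∑ I1 ∈ s q.1, ∑ I2 ∈ s q.2,
          ∑ m ∈ validM q.2 I2, f ⟨q, (I1, I2), m⟩ := by
      rw [hD, Finset.sum_sigma]
      refine Finset.sum_congr rfl fun q _ => ?_
      rw [Finset.sum_sigma]
      rw [Finset.sum_product]
    have e3 : ∀ q ∈ Finset.HasAntidiagonal.antidiagonal N, ∀ I1 ∈ s q.1, ∀ I2 ∈ s q.2,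
        ∑ m ∈ validM q.2 I2, f ⟨q, (I1, I2), m⟩ =
          (Polynomial.X : Polynomial ℤ) ^ (treeStat q.1 I1 + 1) *
            ∑ k ∈ Finset.range (treeStat q.2 I2 + 1), (Polynomial.X : Polynomial ℤ) ^ k := by
      intro q _ I1 _ I2 hI2
      have h2 := (hs _ _).1 hI2
      rw [hf]
      simp only
      calc ∑ m ∈ validM q.2 I2, (Polynomial.X : Polynomial ℤ) ^
            (treeStat q.1 I1 + 1 + (((rootFinset q.2 I2).filter (fun r => m < r)).card))
          = ∑ m ∈ validM q.2 I2, (Polynomial.X : Polynomial ℤ) ^ (treeStat q.1 I1 + 1) *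
              Polynomial.X ^ (((rootFinset q.2 I2).filter (fun r => m < r)).card) := by
            refine Finset.sum_congr rfl fun m _ => ?_
            rw [pow_add]
        _ = (Polynomial.X : Polynomial ℤ) ^ (treeStat q.1 I1 + 1) *
              ∑ m ∈ validM q.2 I2,
                Polynomial.X ^ (((rootFinset q.2 I2).filter (fun r => m < r)).card) := by
            rw [Finset.mul_sum]
        _ = _ := by
            rw [sum_valid_geom h2, treeStat_eq_card, treeStat_eq_card q.2 I2]
    -- now assemble
    have hkey : Φ (N+1) = ∑ q ∈ Finset.HasAntidiagonal.antidiagonal N, ∑ I1 ∈ s q.1, ∑ I2 ∈ s q.2,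
        (Polynomial.X : Polynomial ℤ) ^ (treeStat q.1 I1 + 1) *
          ∑ k ∈ Finset.range (treeStat q.2 I2 + 1), (Polynomial.X : Polynomial ℤ) ^ k := by
      rw [hΦ, ← e1, e2]
      refine Finset.sum_congr rfl fun q hq => ?_
      refine Finset.sum_congr rfl fun I1 h1 => ?_
      refine Finset.sum_congr rfl fun I2 h2 => ?_
      exact e3 q hq I1 h1 I2 h2
    rw [hkey, Finset.mul_sum]
    refine Finset.sum_congr rfl fun q _ => ?_
    -- per q
    have heval : (Φ q.2).eval 1 = ((s q.2).card : ℤ) := by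
      rw [hΦ, Polynomial.eval_finset_sum]
      simp [Polynomial.eval_pow]
    rw [heval, hΦ q.1, hΦ q.2]
    have hC : (Polynomial.C ((s q.2).card : ℤ)) = ∑ _I2 ∈ s q.2, (1 : Polynomial ℤ) := by
      rw [Finset.sum_const, nsmul_eq_mul, mul_one]
      simp
    have hR : Polynomial.X * (∑ I ∈ s q.1, (Polynomial.X : Polynomial ℤ) ^ treeStat q.1 I) *
        (Polynomial.X * (∑ I ∈ s q.2, (Polynomial.X : Polynomial ℤ) ^ treeStat q.2 I) -
          Polynomial.C ((s q.2).card : ℤ)) =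
        ∑ I1 ∈ s q.1, ∑ I2 ∈ s q.2,
          (Polynomial.X * Polynomial.X ^ treeStat q.1 I1) *
            (Polynomial.X * Polynomial.X ^ treeStat q.2 I2 - 1) := by
      rw [Finset.mul_sum, Finset.mul_sum, hC, ← Finset.sum_sub_distrib, Finset.sum_mul_sum]
    rw [hR, Finset.mul_sum]
    refine Finset.sum_congr rfl fun I1 _ => ?_
    rw [Finset.mul_sum]
    refine Finset.sum_congr rfl fun I2 _ => ?_
    have hgeo : ((Polynomial.X : Polynomial ℤ) - 1) *
        ∑ k ∈ Finset.range (treeStat q.2 I2 + 1), (Polynomial.X : Polynomial ℤ) ^ k =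
        (Polynomial.X : Polynomial ℤ) ^ (treeStat q.2 I2 + 1) - 1 := by
      rw [mul_comm, geom_sum_mul]
    calc ((Polynomial.X : Polynomial ℤ) - 1) *
          ((Polynomial.X : Polynomial ℤ) ^ (treeStat q.1 I1 + 1) *
            ∑ k ∈ Finset.range (treeStat q.2 I2 + 1), (Polynomial.X : Polynomial ℤ) ^ k)
        = (Polynomial.X : Polynomial ℤ) ^ (treeStat q.1 I1 + 1) *
            (((Polynomial.X : Polynomial ℤ) - 1) *
              ∑ k ∈ Finset.range (treeStat q.2 I2 + 1), (Polynomial.X : Polynomial ℤ) ^ k) := by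
          ring
      _ = (Polynomial.X : Polynomial ℤ) ^ (treeStat q.1 I1 + 1) *
            ((Polynomial.X : Polynomial ℤ) ^ (treeStat q.2 I2 + 1) - 1) := by rw [hgeo]
      _ = Polynomial.X * Polynomial.X ^ treeStat q.1 I1 *
            (Polynomial.X * Polynomial.X ^ treeStat q.2 I2 - 1) := by ring
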